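/- arXiv:1802.03304 — 2 statements merged into one kernel-verified Lean document; each statement's English description precedes it below -/
import Mathlib

section
/- If the chain (b_1, …, b_r) of integers with all b_i ≥ 2 is of class T, then so is the chain (b_1 + 1, b_2, …, b_r, 2), obtained by increasing the first entry by 1 and appending an entry 2. -/
/-- The Hirzebruch–Jung continued fraction value [c_1, …, c_t] of a list of
rationals, defined by [c_t] = c_t and [c_i, …, c_t] = c_i − 1/[c_{i+1}, …, c_t].
(For the empty list we set the value to 0; since 1/0 = 0 in ℚ, this gives
`hj [c] = c`.) -/
def hj : List ℚ → ℚ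
  | [] => 0
  | c :: rest => c - 1 / hj rest

/-- A chain (b_1, …, b_r) of integers with all b_i ≥ 2 is of class T if
[b_1, …, b_r] = dn²/(dna − 1) for some integers d ≥ 1, n ≥ 2, 1 ≤ a < n with
gcd(n, a) = 1. -/
def IsClassT (l : List ℤ) : Prop :=
  (∀ b ∈ l, 2 ≤ b) ∧
    ∃ d n a : ℤ, 1 ≤ d ∧ 2 ≤ n ∧ 1 ≤ a ∧ a < n ∧ Int.gcd n a = 1 ∧
      hj (l.map (fun b => (b : ℚ))) = (d * n ^ 2 : ℚ) / (d * n * a - 1)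

lemma hj_map_norm (l : List ℤ) :
    (l.map (fun b => (b : ℚ))) = l.map (fun b => Int.cast b) := by
  induction l with
  | nil => rfl
  | cons b t ih => exact congrArg (List.cons ((b : ℤ) : ℚ)) ih

def matHJ : List ℤ → ℤ × ℤ × ℤ × ℤ
  | [] => (1, 0, 0, 1)
  | c :: t =>
    (c * (matHJ t).1 - (matHJ t).2.1, (matHJ t).1,
     c * (matHJ t).2.2.1 - (matHJ t).2.2.2, (matHJ t).2.2.1)

lemma matHJ_cons (c : ℤ) (t : List ℤ) :
    matHJ (c :: t) =
      (c * (matHJ t).1 - (matHJ t).2.1, (matHJ t).1,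
       c * (matHJ t).2.2.1 - (matHJ t).2.2.2, (matHJ t).2.2.1) := rfl

lemma hj_cons (c : ℚ) (t : List ℚ) : hj (c :: t) = c - 1 / hj t := rfl

lemma matHJ_det (l : List ℤ) :
    (matHJ l).1 * (matHJ l).2.2.2 - (matHJ l).2.2.1 * (matHJ l).2.1 = 1 := by
  induction l with
  | nil => simp [matHJ]
  | cons c t ih => rw [matHJ_cons]; linear_combination ih

lemma matHJ_bounds (l : List ℤ) (hne : l ≠ []) (h2 : ∀ b ∈ l, 2 ≤ b) :
    1 ≤ (matHJ l).2.1 ∧ (matHJ l).2.1 < (matHJ l).1 ∧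
      -(matHJ l).2.1 < (matHJ l).2.2.2 ∧ (matHJ l).2.2.2 ≤ 0 := by
  induction l with
  | nil => simp at hne
  | cons b t ih =>
    match t with
    | [] =>
      have hb : 2 ≤ b := h2 b (by simp)
      rw [matHJ_cons]
      simp [matHJ]
      omega
    | c :: t' =>
      have ht2 : ∀ x ∈ c :: t', 2 ≤ x := fun x hx => h2 x (List.mem_cons_of_mem _ hx)
      have hb : 2 ≤ b := h2 b (by simp)
      obtain ⟨h1, h2', h3, h4⟩ := ih (by simp) ht2
      have hdet := matHJ_det (c :: t')
      set p := (matHJ (c :: t')).1 with hpdef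
      set q := (matHJ (c :: t')).2.1 with hqdef
      set p' := (matHJ (c :: t')).2.2.1 with hp'def
      set q' := (matHJ (c :: t')).2.2.2 with hq'def
      rw [matHJ_cons]
      dsimp only
      have hp : (0:ℤ) < p := by omega
      have hA : p' ≤ 0 := by nlinarith
      have hB : -p < p' := by nlinarith
      exact ⟨by omega, by nlinarith, by simpa using hB, hA⟩

lemma hj_matHJ (l : List ℤ) (hne : l ≠ []) (h2 : ∀ b ∈ l, 2 ≤ b) :
    hj (l.map (fun b => Int.cast b)) = ((matHJ l).1 : ℚ) / ((matHJ l).2.1 : ℚ) := by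
  induction l with
  | nil => simp at hne
  | cons b t ih =>
    match t with
    | [] => simp [hj, matHJ]
    | c :: t' =>
      have ht2 : ∀ x ∈ c :: t', 2 ≤ x := fun x hx => h2 x (List.mem_cons_of_mem _ hx)
      obtain ⟨h1, h2', _, _⟩ := matHJ_bounds (c :: t') (by simp) ht2
      have hp : (0:ℤ) < (matHJ (c :: t')).1 := by omega
      have hq : (0:ℤ) < (matHJ (c :: t')).2.1 := by omega
      have ihe := ih (by simp) ht2
      rw [List.map_cons, hj_cons, ihe, matHJ_cons b (c :: t')]
      have hpq : ((matHJ (c :: t')).1 : ℚ) ≠ 0 := by exact_mod_cast hp.ne'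
      have hqq : ((matHJ (c :: t')).2.1 : ℚ) ≠ 0 := by exact_mod_cast hq.ne'
      dsimp only
      push_cast
      field_simp

lemma matHJ_append_two (l : List ℤ) :
    matHJ (l ++ [2]) =
      (2 * (matHJ l).1 + (matHJ l).2.2.1, 2 * (matHJ l).2.1 + (matHJ l).2.2.2,
       -(matHJ l).1, -(matHJ l).2.1) := by
  induction l with
  | nil => simp [matHJ]
  | cons c t ih =>
    show matHJ (c :: (t ++ [2])) = _
    rw [matHJ_cons, ih, matHJ_cons]
    refine congrArg₂ _ (by ring) (congrArg₂ _ (by ring) (congrArg₂ _ (by ring) (by ring)))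

/-- If the chain (b_1, …, b_r) with all b_i ≥ 2 is of class T, then so is the
chain (b_1 + 1, b_2, …, b_r, 2), obtained by increasing the first entry by 1
and appending an entry 2. -/
theorem classT_append_two (l : List ℤ) (hne : l ≠ [])
    (h2 : ∀ b ∈ l, 2 ≤ b) (hT : IsClassT l) :
    IsClassT (((l.getD 0 0 + 1) :: l.tail) ++ [2]) := by
  obtain ⟨-, d, n, a, hd, hn, ha, han, hgcd, hval⟩ := hT
  obtain ⟨b, tail, rfl⟩ : ∃ b tail, l = b :: tail := by
    cases l with
    | nil => exact absurd rfl hne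
    | cons b t => exact ⟨b, t, rfl⟩
  simp only [List.getD_cons_zero, List.tail_cons] at *
  -- the old matrix data
  have hbd := matHJ_bounds (b :: tail) (by simp) h2
  have hdet := matHJ_det (b :: tail)
  have hhj := hj_matHJ (b :: tail) (by simp) h2
  set p := (matHJ (b :: tail)).1 with hpdef
  set q := (matHJ (b :: tail)).2.1 with hqdef
  set p' := (matHJ (b :: tail)).2.2.1 with hp'def
  set q' := (matHJ (b :: tail)).2.2.2 with hq'def
  clear_value p q p' q'
  obtain ⟨hq1, hqp, hq'l, hq'u⟩ := hbd
  rw [hj_map_norm, hhj] at hval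
  -- identify p and q
  have hna2 : (2:ℤ) ≤ n * a := by nlinarith
  have hA1 : (1:ℤ) ≤ d * n * a - 1 := by
    nlinarith [mul_le_mul hd hna2 (by omega : (0:ℤ) ≤ 2) (by omega : (0:ℤ) ≤ d)]
  have hN1 : (1:ℤ) ≤ d * n ^ 2 := by nlinarith
  have hq0 : ((q:ℤ):ℚ) ≠ 0 := by exact_mod_cast (by omega : q ≠ 0)
  have hA0 : ((d:ℚ) * n * a - 1) ≠ 0 := by
    have : (((d * n * a - 1 : ℤ)):ℚ) ≠ 0 := by exact_mod_cast (by omega : d*n*a - 1 ≠ 0)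
    push_cast at this
    convert this using 2
  have hZ : p * (d * n * a - 1) = d * n ^ 2 * q := by
    rw [div_eq_div_iff hq0 hA0] at hval
    exact_mod_cast hval
  have hcop_pq : IsCoprime p q := ⟨q', -p', by linear_combination hdet⟩
  have hcop_AN : IsCoprime (d * n * a - 1) (d * n ^ 2) :=
    ⟨-(d * n * a + 1), d * a ^ 2, by ring⟩
  have hd1 : q ∣ p * (d * n * a - 1) := ⟨d * n ^ 2, by linear_combination hZ⟩
  have hqdvdA : q ∣ d * n * a - 1 := hcop_pq.symm.dvd_of_dvd_mul_left hd1
  have hd2 : (d * n * a - 1) ∣ (d * n ^ 2) * q := ⟨p, by linear_combination -hZ⟩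
  have hAdvdq : (d * n * a - 1) ∣ q := hcop_AN.dvd_of_dvd_mul_left hd2
  have hqA : q = d * n * a - 1 := Int.dvd_antisymm (by omega) (by omega) hqdvdA hAdvdq
  have hpN : p = d * n ^ 2 := by
    have h := hZ
    rw [hqA] at h
    exact mul_right_cancel₀ (by omega : d * n * a - 1 ≠ 0) (by linarith)
  -- identify q' and p'
  have hdet' : d * n ^ 2 * q' - p' * (d * n * a - 1) = 1 := by
    rw [← hpN, ← hqA]; exact hdet
  have hda2 : (1:ℤ) ≤ d * a ^ 2 := by nlinarith
  have hdana : (1:ℤ) ≤ d * a * (n - a) := by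
    have h1 : (1:ℤ) ≤ d * a := by nlinarith
    nlinarith
  have hq'0u : d * a ^ 2 - d * n * a + 1 ≤ 0 := by nlinarith
  have hq'0l : -(d * n * a - 1) < d * a ^ 2 - d * n * a + 1 := by linarith
  have hd3 : (d * n * a - 1) ∣ (d * n ^ 2) * (q' - (d * a ^ 2 - d * n * a + 1)) :=
    ⟨p' - (d * n * a + 1 - d * n ^ 2), by linear_combination hdet'⟩
  have hAdvd : (d * n * a - 1) ∣ (q' - (d * a ^ 2 - d * n * a + 1)) :=
    hcop_AN.dvd_of_dvd_mul_left hd3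
  have hq'eq : q' = d * a ^ 2 - d * n * a + 1 := by
    have hz := Int.eq_zero_of_abs_lt_dvd hAdvd (by
      rw [abs_lt]
      constructor <;> [skip; skip] <;> omega)
    omega
  have hp'eq : p' = d * n * a + 1 - d * n ^ 2 := by
    have h := hdet'
    rw [hq'eq] at h
    have h2' : p' * (d * n * a - 1) = (d * n * a + 1 - d * n ^ 2) * (d * n * a - 1) := by ring_nf; linear_combination -h
    exact mul_right_cancel₀ (by omega : d * n * a - 1 ≠ 0) h2'
  -- the new matrix data
  have happ := matHJ_append_two (b :: tail)
  rw [List.cons_append, matHJ_cons] at happ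
  simp only [Prod.mk.injEq] at happ
  rw [← hpdef, ← hqdef, ← hp'def, ← hq'def] at happ
  obtain ⟨e1, e2, e3, e4⟩ := happ
  have hL2 : ∀ x ∈ (b + 1) :: (tail ++ [2]), 2 ≤ x := by
    intro x hx
    rcases List.mem_cons.mp hx with h | h
    · have := h2 b (by simp); omega
    · rcases List.mem_append.mp h with h' | h'
      · exact h2 x (List.mem_cons_of_mem _ h')
      · simp at h'; omega
  have hP : (matHJ ((b + 1) :: (tail ++ [2]))).1 = d * (n + a) ^ 2 := by
    rw [matHJ_cons]
    dsimp only
    have : (b + 1) * (matHJ (tail ++ [2])).1 - (matHJ (tail ++ [2])).2.1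
        = (b * (matHJ (tail ++ [2])).1 - (matHJ (tail ++ [2])).2.1)
          + (matHJ (tail ++ [2])).1 := by ring
    rw [this, e1, e2, hpN, hqA, hp'eq, hq'eq]
    ring
  have hQ : (matHJ ((b + 1) :: (tail ++ [2]))).2.1 = d * (n + a) * a - 1 := by
    rw [matHJ_cons]
    dsimp only
    rw [e2, hqA, hq'eq]
    ring
  refine ⟨hL2, d, n + a, a, hd, by omega, ha, by omega, ?_, ?_⟩
  · have hc : IsCoprime n a := Int.isCoprime_iff_gcd_eq_one.mpr hgcd
    have := hc.add_mul_left_left 1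
    rw [mul_one] at this
    exact Int.isCoprime_iff_gcd_eq_one.mp this
  · rw [List.cons_append, hj_map_norm, hj_matHJ _ (by simp) hL2, hP, hQ]
    push_cast
    ring
end

section
/- Every chain (b_1, …, b_r) of integers with all b_i ≥ 2 that is of class T can be obtained from the chain (4) or from a chain of the form (3, 2, …, 2, 3) (with k ≥ 0 intermediate entries equal to 2) by finitely many applications of the two operations (b_1, …, b_r) ↦ (2, b_1, …, b_{r−1}, b_r + 1) and (b_1, …, b_r) ↦ (b_1 + 1, b_2, …, b_r, 2). -/
/-- One of the two operations generating class T chains: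
(b_1, …, b_r) ↦ (2, b_1, …, b_{r−1}, b_r + 1) or
(b_1, …, b_r) ↦ (b_1 + 1, b_2, …, b_r, 2). -/
inductive TMove : List ℤ → List ℤ → Prop
  | left (l : List ℤ) (hne : l ≠ []) :
      TMove l (2 :: (l.dropLast ++ [l.getD (l.length - 1) 0 + 1]))
  | right (l : List ℤ) (hne : l ≠ []) :
      TMove l (((l.getD 0 0 + 1) :: l.tail) ++ [2])



structure M4 where
  p : ℤ
  q : ℤ
  u : ℤ
  v : ℤ

def mat : List ℤ → M4
  | [] => ⟨1, 0, 0, -1⟩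
  | b :: r => ⟨b * (mat r).p - (mat r).q, (mat r).p, b * (mat r).u - (mat r).v, (mat r).u⟩

lemma mat_inv (l : List ℤ) (h : ∀ b ∈ l, 2 ≤ b) :
    0 ≤ (mat l).q ∧ (mat l).q < (mat l).p ∧ -1 ≤ (mat l).v ∧ (mat l).v < (mat l).u ∧
      1 ≤ (mat l).q - (mat l).v ∧ (mat l).q - (mat l).v ≤ (mat l).p - (mat l).u := by
  induction l with
  | nil => simp [mat]
  | cons b r ih =>
    have hb : 2 ≤ b := h b (by simp)
    obtain ⟨h1, h2, h3, h4, h5, h6⟩ := ih (fun x hx => h x (by simp [hx]))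
    have hu : 0 ≤ (mat r).u := by omega
    refine ⟨by simp [mat]; omega, ?_, by simp [mat]; omega, ?_, by simp [mat]; omega, ?_⟩
    · show (mat r).p < b * (mat r).p - (mat r).q
      nlinarith
    · show (mat r).u < b * (mat r).u - (mat r).v
      rcases eq_or_lt_of_le hu with h' | h'
      · nlinarith
      · nlinarith
    · show (mat r).p - (mat r).u ≤ (b * (mat r).p - (mat r).q) - (b * (mat r).u - (mat r).v)
      nlinarith

lemma mat_det (l : List ℤ) : (mat l).q * (mat l).u - (mat l).p * (mat l).v = 1 := by
  induction l with
  | nil => simp [mat]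
  | cons b r ih => simp only [mat]; ring_nf; ring_nf at ih; linarith

lemma mat_append (l : List ℤ) (c : ℤ) :
    mat (l ++ [c]) = ⟨c * (mat l).p - (mat l).u, c * (mat l).q - (mat l).v, (mat l).p, (mat l).q⟩ := by
  induction l with
  | nil => simp [mat]
  | cons b r ih =>
    show mat (b :: (r ++ [c])) = _
    simp only [mat, ih]
    simp only [M4.mk.injEq, and_true]
    ring

lemma mat_p_pos (l : List ℤ) (h : ∀ b ∈ l, 2 ≤ b) : 1 ≤ (mat l).p := by
  obtain ⟨h1, h2, _⟩ := mat_inv l h; omega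

lemma mat_q_pos (l : List ℤ) (h : ∀ b ∈ l, 2 ≤ b) (hne : l ≠ []) : 1 ≤ (mat l).q := by
  match l with
  | b :: r =>
    have := mat_p_pos r (fun x hx => h x (by simp [hx]))
    simpa [mat] using this

lemma mat_coprime (l : List ℤ) : IsCoprime (mat l).p (mat l).q := by
  have := mat_det l
  exact ⟨-(mat l).v, (mat l).u, by linarith⟩

lemma map_coe_eq (l : List ℤ) : l.map (fun b => (b : ℚ)) = l.map (fun b : ℤ => (b : ℚ)) := by
  induction l with
  | nil => rfl
  | cons b r ih => simpa using ih

lemma hj_mat (l : List ℤ) (h : ∀ b ∈ l, 2 ≤ b) :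
    hj (l.map (fun b : ℤ => (b : ℚ))) = ((mat l).p : ℚ) / ((mat l).q : ℚ) := by
  induction l with
  | nil => simp [hj, mat]
  | cons b r ih =>
    have hp : (1 : ℤ) ≤ (mat r).p := mat_p_pos r (fun x hx => h x (by simp [hx]))
    have hp' : ((mat r).p : ℚ) ≠ 0 := by
      exact_mod_cast (by omega : (mat r).p ≠ 0)
    rw [List.map_cons, hj, ih (fun x hx => h x (by simp [hx]))]
    rw [one_div_div]
    show (b : ℚ) - ((mat r).q : ℚ) / ((mat r).p : ℚ) = (((mat (b :: r)).p : ℤ) : ℚ) / _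
    simp only [mat]
    push_cast
    field_simp

lemma chain23 (l : List ℤ) (h : ∀ b ∈ l, 2 ≤ b) (hne : l ≠ []) (he : (mat l).p = (mat l).q + 2) :
    ∃ k : ℕ, l = List.replicate k 2 ++ [3] := by
  induction l with
  | nil => exact absurd rfl hne
  | cons c r ih =>
    have hc : 2 ≤ c := h c (by simp)
    have hr : ∀ b ∈ r, 2 ≤ b := fun x hx => h x (by simp [hx])
    rcases eq_or_ne r [] with rfl | hrne
    · have : c = 3 := by simpa [mat] using he
      exact ⟨0, by simp [this]⟩
    · obtain ⟨h1, h2, _⟩ := mat_inv r hr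
      have hq1 : 1 ≤ (mat r).q := mat_q_pos r hr hrne
      have he' : c * (mat r).p - (mat r).q = (mat r).p + 2 := by simpa [mat] using he
      have hp2 : 2 ≤ (mat r).p := by omega
      have hc2 : c = 2 := by nlinarith
      subst hc2
      have : (mat r).p = (mat r).q + 2 := by omega
      obtain ⟨k, hk⟩ := ih hr hrne this
      exact ⟨k + 1, by simp [hk, List.replicate_succ]⟩
lemma arith_one_le_mul (d a : ℤ) (hd : 1 ≤ d) (ha : 1 ≤ a) : 1 ≤ d * a := by nlinarith

lemma arith_base (d n a : ℤ) (hd : 1 ≤ d) (hn : 2 ≤ n) (ha : 1 ≤ a) (h : d * n * a = 2) :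
    d = 1 ∧ n = 2 ∧ a = 1 := by
  have hda : 1 ≤ d * a := arith_one_le_mul d a hd ha
  have h1 : n * 1 ≤ n * (d * a) := mul_le_mul_of_nonneg_left hda (by linarith)
  have h2 : n * (d * a) = 2 := by linear_combination h
  have hn2 : n = 2 := by omega
  subst hn2
  have h3 : d * a = 1 := by linarith
  have h4 : d * 1 ≤ d * a := mul_le_mul_of_nonneg_left ha (by linarith)
  have hd1 : d = 1 := by omega
  subst hd1
  exact ⟨rfl, rfl, by linarith⟩

lemma arith_dn (d n : ℤ) (hd : 1 ≤ d) (hn : 2 ≤ n) : 2 ≤ d * n :=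
  le_trans hn (le_mul_of_one_le_left (by linarith) hd)

lemma arith_D (d n a : ℤ) (hd : 1 ≤ d) (hn : 2 ≤ n) (ha : 1 ≤ a) (han : a < n) :
    d * n * a + 2 ≤ d * n ^ 2 := by
  have hdn := arith_dn d n hd hn
  have h2 : d * n * 1 ≤ d * n * (n - a) := mul_le_mul_of_nonneg_left (by omega) (by linarith)
  nlinarith [h2, hdn]

lemma arith_F (d n a : ℤ) (hd : 1 ≤ d) (hn : 2 ≤ n) (ha : 1 ≤ a) (h : n < 2 * a) :
    d * n ^ 2 ≤ 2 * (d * n * a - 1) := by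
  have hdn := arith_dn d n hd hn
  have h2 : d * n * 1 ≤ d * n * (2 * a - n) := mul_le_mul_of_nonneg_left (by omega) (by linarith)
  nlinarith [h2, hdn]

lemma arith_H (d n a : ℤ) (hd : 1 ≤ d) (hn : 2 ≤ n) (ha : 1 ≤ a) (h : n < 2 * a) :
    d * n * a - 1 < 2 * (d * a ^ 2) := by
  have hda := arith_one_le_mul d a hd ha
  have h2 : d * a * 1 ≤ d * a * (2 * a - n) := mul_le_mul_of_nonneg_left (by omega) (by linarith)
  nlinarith [h2, hda]

lemma arith_J (d n a : ℤ) (hd : 1 ≤ d) (hn : 2 ≤ n) (ha : 1 ≤ a) (h : 2 * a < n) :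
    2 * (d * n * a - 1) + 4 ≤ d * n ^ 2 := by
  have hdn := arith_dn d n hd hn
  have h2 : d * n * 1 ≤ d * n * (n - 2 * a) := mul_le_mul_of_nonneg_left (by omega) (by linarith)
  nlinarith [h2, hdn]

lemma arith_K (d n a : ℤ) (hd : 1 ≤ d) (hn : 2 ≤ n) (ha : 1 ≤ a) (h : 2 * a < n) :
    2 * (d * a ^ 2) ≤ d * n * a - 1 := by
  have hda := arith_one_le_mul d a hd ha
  have h2 : d * a * 1 ≤ d * a * (n - 2 * a) := mul_le_mul_of_nonneg_left (by omega) (by linarith)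
  nlinarith [h2, hda]

lemma getD_concat (x : List ℤ) (y : ℤ) : (x ++ [y]).getD ((x ++ [y]).length - 1) 0 = y := by
  induction x with
  | nil => rfl
  | cons a r ih => simpa using ih

set_option maxHeartbeats 1600000 in
lemma main_ind : ∀ (r : ℕ) (l : List ℤ), l.length ≤ r → (∀ b ∈ l, 2 ≤ b) → l ≠ [] →
    (∃ d n a : ℤ, 1 ≤ d ∧ 2 ≤ n ∧ 1 ≤ a ∧ a < n ∧ IsCoprime n a ∧
      (mat l).p = d * n ^ 2 ∧ (mat l).q = d * n * a - 1) →
    ∃ l₀ : List ℤ,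
      (l₀ = [4] ∨ ∃ k : ℕ, l₀ = (3 : ℤ) :: (List.replicate k 2 ++ [3])) ∧
        Relation.ReflTransGen TMove l₀ l := by
  intro r
  induction r with
  | zero =>
    intro l hlen _ hne _
    exact absurd (List.length_eq_zero_iff.mp (Nat.le_zero.mp hlen)) hne
  | succ r ih =>
    rintro l hlen h2 hne ⟨d, n, a, hd, hn, ha, han, hcop, hp, hq⟩
    obtain ⟨b, t, rfl⟩ := List.exists_cons_of_ne_nil hne
    have hb : 2 ≤ b := h2 b (by simp)
    have h2t : ∀ x ∈ t, 2 ≤ x := fun x hx => h2 x (by simp [hx])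
    have e1 : (mat (b :: t)).p = b * (mat t).p - (mat t).q := rfl
    have e2 : (mat (b :: t)).q = (mat t).p := rfl
    have e3 : (mat (b :: t)).u = b * (mat t).u - (mat t).v := rfl
    have e4 : (mat (b :: t)).v = (mat t).u := rfl
    rcases eq_or_ne t [] with rfl | htne
    · -- single-entry chain : must be [4]
      have hq' : (1:ℤ) = d * n * a - 1 := by simpa [mat] using hq
      have hdna : d * n * a = 2 := by linarith
      obtain ⟨hd1, hn2, ha1⟩ := arith_base d n a hd hn ha hdna
      have hb4 : b = 4 := by
        have hmb : (mat [b]).p = b := by simp [mat]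
        rw [hmb] at hp; subst hd1 hn2; linarith
      exact ⟨[4], Or.inl rfl, by rw [hb4]⟩
    · -- length ≥ 2
      obtain ⟨iq0, iqp, iv1, ivu, iqv1, iqvpu⟩ := mat_inv (b :: t) h2
      obtain ⟨tq0, tqp, tv1, tvu, tqv1, tqvpu⟩ := mat_inv t h2t
      have det := mat_det (b :: t)
      have hQ2 : 2 ≤ (mat (b :: t)).q := by
        have := mat_q_pos t h2t htne; omega
      have hQ1 : 1 ≤ (mat t).q := mat_q_pos t h2t htne
      have hP1 : 1 ≤ (mat (b :: t)).p := by omega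
      have hV0 : 0 ≤ (mat (b :: t)).v := by
        rw [e4]; omega
      have hU1 : 1 ≤ (mat (b :: t)).u := by omega
      set P := (mat (b :: t)).p with hPdef
      set Q := (mat (b :: t)).q with hQdef
      set U := (mat (b :: t)).u with hUdef
      set V := (mat (b :: t)).v with hVdef
      -- key numeric identities
      have key : (Q + 1) ^ 2 = P * (d * a ^ 2) := by rw [hp, hq]; ring
      have hQP2 : Q + 1 ≤ P - 2 := by
        rw [hp, hq]; linarith [arith_D d n a hd hn ha han]
      have hdvd : P ∣ (Q + U + 2) * Q := by
        refine ⟨d * a ^ 2 + V, ?_⟩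
        linear_combination key + det
      have hPU : U = P - Q - 2 := by
        obtain ⟨e, he⟩ := (mat_coprime (b :: t)).dvd_of_dvd_mul_right hdvd
        have h1 : 0 < Q + U + 2 := by omega
        have h2' : Q + U + 2 ≤ 2 * P - 1 := by omega
        have hepos : 1 ≤ e := by
          by_contra h'
          have he0 : e ≤ 0 := by omega
          have : P * e ≤ 0 := mul_nonpos_iff.mpr (Or.inl ⟨by omega, he0⟩)
          linarith
        have helt : e ≤ 1 := by
          by_contra h'
          have h2e : 2 ≤ e := by omega
          have h4 : P * 2 ≤ P * e := mul_le_mul_of_nonneg_left h2e (by omega)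
          linarith
        have he1 : e = 1 := le_antisymm helt hepos
        rw [he1, mul_one] at he
        omega
      have hVval : V = Q - d * a ^ 2 := by
        have h1 : P * V = P * (Q - d * a ^ 2) := by
          linear_combination (-(1:ℤ)) * det - key + Q * hPU
        exact mul_left_cancel₀ (by omega) h1
      -- decompose t from the right
      have htdne := htne
      set c := t.getLast htne with hcdef
      set mid := t.dropLast with hmiddef
      have htd : mid ++ [c] = t := List.dropLast_append_getLast htne
      have hc2 : 2 ≤ c := h2t c (List.getLast_mem htne)
      have h2mid : ∀ x ∈ mid, 2 ≤ x := fun x hx =>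
        h2t x ((List.dropLast_sublist t).subset hx)
      obtain ⟨mq0, mqp, mv1, mvu, mqv1, mqvpu⟩ := mat_inv mid h2mid
      have emat : mat t = ⟨c * (mat mid).p - (mat mid).u, c * (mat mid).q - (mat mid).v,
          (mat mid).p, (mat mid).q⟩ := by
        rw [← htd]; exact mat_append mid c
      have et1 : (mat t).p = c * (mat mid).p - (mat mid).u := by rw [emat]
      have et2 : (mat t).q = c * (mat mid).q - (mat mid).v := by rw [emat]
      have et3 : (mat t).u = (mat mid).p := by rw [emat]
      have et4 : (mat t).v = (mat mid).q := by rw [emat]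
      have hlen' : t.length ≤ r := by
        simpa using Nat.succ_le_succ_iff.mp (by simpa using hlen)
      rcases lt_trichotomy n (2 * a) with h2a | h2a | h2a
      · -- n < 2a : first entry is 2, last ≥ 3; shrink from the right
        have ha2 : 2 ≤ a := by omega
        have hPQle : P ≤ 2 * Q := by
          rw [hp, hq]; linarith [arith_F d n a hd hn ha h2a]
        have hb2 : b = 2 := by
          by_contra hbne
          have hb3 : 3 ≤ b := by omega
          have h3 : 3 * (mat t).p ≤ b * (mat t).p :=
            mul_le_mul_of_nonneg_right (by omega) (by omega)
          linarith [e1, hPQle]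
        -- c ≥ 3
        have hcV : c * V = Q + (mat mid).u := by
          rw [e4, et3, e2, et1]; ring
        have hU0le : (mat mid).u ≤ V - 1 := by
          rw [e4, et3]; omega
        have hU0ge : 0 ≤ (mat mid).u := by omega
        have hda2 : 1 ≤ d * a := arith_one_le_mul d a hd ha
        have hQlt : Q < 2 * (d * a ^ 2) := by
          rw [hq]; linarith [arith_H d n a hd hn ha h2a]
        have hc3 : 3 ≤ c := by
          by_contra hcne
          have hc2'' : c = 2 := by omega
          rw [hc2''] at hcV
          linarith [hcV, hU0ge, hVval, hQlt]
        -- the shrunk chain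
        set l' := mid ++ [c - 1] with hl'def
        have hne' : l' ≠ [] := by simp [hl'def]
        have h2' : ∀ x ∈ l', 2 ≤ x := by
          intro x hx
          rcases List.mem_append.mp hx with hx | hx
          · exact h2mid x hx
          · simp at hx; omega
        have hlenl' : l'.length ≤ r := by
          have : mid.length + 1 = t.length := by
            rw [hmiddef]
            have := @List.length_dropLast _ t
            have ht1 : 1 ≤ t.length := List.length_pos_iff.mpr htne
            omega
          simp only [hl'def, List.length_append, List.length_singleton]
          omega
        have ematl' : mat l' = ⟨(c - 1) * (mat mid).p - (mat mid).u,
            (c - 1) * (mat mid).q - (mat mid).v, (mat mid).p, (mat mid).q⟩ :=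
          mat_append mid (c - 1)
        have hp' : (mat l').p = d * a ^ 2 := by
          rw [ematl']
          show (c - 1) * (mat mid).p - (mat mid).u = d * a ^ 2
          have h1 : (mat mid).p = V := by rw [e4, et3]
          have h2'' : c * (mat mid).p - (mat mid).u = Q := by
            rw [e2, et1]
          rw [hVval] at h1
          linarith [h1, h2'']
        have hq' : (mat l').q = d * a * (2 * a - n) - 1 := by
          rw [ematl']
          show (c - 1) * (mat mid).q - (mat mid).v = d * a * (2 * a - n) - 1
          have h1 : (mat mid).q = 2 * V - U := by
            rw [e4, e3, et4, et3, hb2]; ring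
          have h2'' : c * (mat mid).q - (mat mid).v = 2 * Q - P := by
            have : (mat t).q = 2 * Q - P := by
              rw [e2, e1, hb2]; ring
            rw [← et2, this]
          have h3 : (c - 1) * (mat mid).q - (mat mid).v
              = (2 * Q - P) - (2 * V - U) := by
            rw [← h1, ← h2'']; ring
          rw [h3, hPU, hVval, hq]; ring
        have hcop' : IsCoprime (a : ℤ) (2 * a - n) := by
          obtain ⟨x, y, hxy⟩ := hcop
          exact ⟨y + 2 * x, -x, by linear_combination hxy⟩
        obtain ⟨l₀, hbase, hpath⟩ := ih l' hlenl' h2' hne'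
          ⟨d, a, 2 * a - n, hd, ha2, by omega, by omega, hcop', hp', hq'⟩
        refine ⟨l₀, hbase, hpath.tail ?_⟩
        have hmove := TMove.left l' hne'
        have hdl : l'.dropLast = mid := by simp [hl'def]
        have hgd : l'.getD (l'.length - 1) 0 = c - 1 := getD_concat mid (c - 1)
        rw [hdl, hgd] at hmove
        have : mid ++ [c - 1 + 1] = t := by
          have : c - 1 + 1 = c := by ring
          rw [this, htd]
        rw [this] at hmove
        rwa [hb2]
      · -- n = 2a : base chain (3, 2, …, 2, 3)
        have haunit : IsUnit a := hcop.isUnit_of_dvd' ⟨2, by omega⟩ dvd_rfl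
        have ha1 : a = 1 := by
          rcases Int.isUnit_iff.mp haunit with h | h <;> omega
        have hn2 : n = 2 := by omega
        have hP2Q : P = 2 * Q + 2 := by
          rw [hp, hq, ha1, hn2]; ring
        have hb3lo : 3 ≤ b := by
          by_contra hbne
          have hb2 : b = 2 := by omega
          have h3 : P = 2 * (mat t).p - (mat t).q := by rw [e1, hb2]
          linarith
        have hb3hi : b ≤ 3 := by
          by_contra hbne
          have hb4 : 4 ≤ b := by omega
          have h1 : 4 * (mat t).p ≤ b * (mat t).p :=
            mul_le_mul_of_nonneg_right (by omega) (by omega)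
          linarith [e1]
        have hb3 : b = 3 := by omega
        have hQ2eq : (mat t).p = (mat t).q + 2 := by
          have : P = 3 * (mat t).p - (mat t).q := by rw [e1, hb3]
          omega
        obtain ⟨k, hk⟩ := chain23 t h2t htne hQ2eq
        exact ⟨b :: t, Or.inr ⟨k, by rw [hb3, hk]⟩, Relation.ReflTransGen.refl⟩
      · -- n > 2a : last entry is 2, first ≥ 3; shrink from the left
        have hna2 : 2 ≤ n - a := by omega
        have hP2Q : 2 * Q + 4 ≤ P := by
          rw [hp, hq]; linarith [arith_J d n a hd hn ha h2a]
        have hb3 : 3 ≤ b := by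
          by_contra hbne
          have hb2 : b = 2 := by omega
          have h3 : P = 2 * (mat t).p - (mat t).q := by rw [e1, hb2]
          linarith
        have hcV : c * V = Q + (mat mid).u := by
          rw [e4, et3, e2, et1]; ring
        have hU0le : (mat mid).u ≤ V - 1 := by
          rw [e4, et3]; omega
        have hU0ge : 0 ≤ (mat mid).u := by omega
        have hda2 : 1 ≤ d * a := arith_one_le_mul d a hd ha
        have hQge : 2 * (d * a ^ 2) ≤ Q := by
          rw [hq]; linarith [arith_K d n a hd hn ha h2a]
        have hc2' : c = 2 := by
          by_contra hcne
          have hc3 : 3 ≤ c := by omega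
          have h3 : 3 * V ≤ c * V := mul_le_mul_of_nonneg_right hc3 (by omega)
          linarith [hcV, hU0le, hVval, hQge]
        set l' := (b - 1) :: mid with hl'def
        have hne' : l' ≠ [] := by simp [hl'def]
        have h2' : ∀ x ∈ l', 2 ≤ x := by
          intro x hx
          rcases List.mem_cons.mp hx with hx | hx
          · omega
          · exact h2mid x hx
        have hlenl' : l'.length ≤ r := by
          have hml : mid.length + 1 = t.length := by
            rw [hmiddef]
            have := @List.length_dropLast _ t
            have ht1 : 1 ≤ t.length := List.length_pos_iff.mpr htne
            omega
          simp only [hl'def, List.length_cons]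
          omega
        have hp' : (mat l').p = d * (n - a) ^ 2 := by
          show (b - 1) * (mat mid).p - (mat mid).q = d * (n - a) ^ 2
          have h1 : (mat mid).p = V := by rw [e4, et3]
          have h2'' : (mat mid).q = b * V - U := by
            rw [e4, e3, et4, et3]; ring
          rw [h1, h2'']
          have : (b - 1) * V - (b * V - U) = U - V := by ring
          rw [this, hPU, hVval, hp, hq]; ring
        have hq' : (mat l').q = d * (n - a) * a - 1 := by
          show (mat mid).p = d * (n - a) * a - 1
          have h1 : (mat mid).p = V := by rw [e4, et3]
          rw [h1, hVval, hq]; ring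
        have hcop' : IsCoprime (n - a : ℤ) a := by
          obtain ⟨x, y, hxy⟩ := hcop
          exact ⟨x, y + x, by linear_combination hxy⟩
        obtain ⟨l₀, hbase, hpath⟩ := ih l' hlenl' h2' hne'
          ⟨d, n - a, a, hd, hna2, ha, by omega, hcop', hp', hq'⟩
        refine ⟨l₀, hbase, hpath.tail ?_⟩
        have hmove := TMove.right l' hne'
        have hgd : l'.getD 0 0 = b - 1 := rfl
        have htl : l'.tail = mid := rfl
        rw [hgd, htl] at hmove
        have heq : ((b - 1 + 1) :: mid) ++ [2] = b :: t := by
          have h1 : b - 1 + 1 = b := by ring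
          rw [h1]
          show b :: (mid ++ [2]) = b :: t
          rw [← hc2', htd]
        rwa [heq] at hmove

/-- Every chain of integers ≥ 2 that is of class T can be obtained from (4) or
from some (3, 2, …, 2, 3) (with k ≥ 0 intermediate entries 2) by finitely many
applications of the two operations. -/
theorem classT_generated (l : List ℤ) (h2 : ∀ b ∈ l, 2 ≤ b) (hT : IsClassT l) :
    ∃ l₀ : List ℤ,
      (l₀ = [4] ∨ ∃ k : ℕ, l₀ = (3 : ℤ) :: (List.replicate k 2 ++ [3])) ∧
        Relation.ReflTransGen TMove l₀ l := by
  obtain ⟨-, d, n, a, hd, hn, ha, han, hgcd, hhj⟩ := hT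
  have hcop : IsCoprime (n : ℤ) a := Int.isCoprime_iff_gcd_eq_one.mpr hgcd
  have hdna2 : 2 ≤ d * n * a := by
    have hdn := arith_dn d n hd hn
    have h1 : d * n * 1 ≤ d * n * a := mul_le_mul_of_nonneg_left ha (by linarith)
    linarith
  have hP2 : 2 ≤ d * n ^ 2 := by
    have hdn := arith_dn d n hd hn
    have h1 : d * n * 1 ≤ d * n * n := mul_le_mul_of_nonneg_left (by linarith) (by linarith)
    nlinarith [h1, hdn]
  have hdenZ : (0 : ℤ) < d * n * a - 1 := by linarith
  have hdenom : ((d : ℚ) * n * a - 1) ≠ 0 := by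
    have : ((d * n * a - 1 : ℤ) : ℚ) ≠ 0 := by exact_mod_cast hdenZ.ne'
    push_cast at this
    convert this using 2
  have hne : l ≠ [] := by
    rintro rfl
    rw [map_coe_eq] at hhj
    have h0 : hj (([] : List ℤ).map (fun b : ℤ => (b : ℚ))) = 0 := rfl
    rw [h0] at hhj
    rcases div_eq_zero_iff.mp hhj.symm with h | h
    · have : ((d * n ^ 2 : ℤ) : ℚ) = 0 := by push_cast; convert h using 2
      have : (d * n ^ 2 : ℤ) = 0 := by exact_mod_cast this
      omega
    · exact hdenom h
  have hmat := hj_mat l h2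
  rw [map_coe_eq, hmat] at hhj
  have hP1 : 1 ≤ (mat l).p := mat_p_pos l h2
  have hQ1 : 1 ≤ (mat l).q := mat_q_pos l h2 hne
  have hQne : ((mat l).q : ℚ) ≠ 0 := by
    exact_mod_cast (by omega : (mat l).q ≠ 0)
  rw [div_eq_div_iff hQne hdenom] at hhj
  have hZ : (mat l).p * (d * n * a - 1) = d * n ^ 2 * (mat l).q := by
    exact_mod_cast hhj
  have hcop2 : IsCoprime (d * n ^ 2) (d * n * a - 1) :=
    ⟨d * a ^ 2, -(d * n * a + 1), by ring⟩
  have hcopPQ := mat_coprime l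
  have h1 : (mat l).p ∣ d * n ^ 2 :=
    hcopPQ.dvd_of_dvd_mul_right ⟨d * n * a - 1, hZ.symm⟩
  have h2d : d * n ^ 2 ∣ (mat l).p :=
    hcop2.dvd_of_dvd_mul_right ⟨(mat l).q, hZ⟩
  have hPeq : (mat l).p = d * n ^ 2 :=
    Int.dvd_antisymm (by linarith) (by linarith) h1 h2d
  have hQeq : (mat l).q = d * n * a - 1 := by
    rw [hPeq] at hZ
    exact (mul_left_cancel₀ (by omega : (d * n ^ 2 : ℤ) ≠ 0) hZ).symm
  exact main_ind l.length l le_rfl h2 hne ⟨d, n, a, hd, hn, ha, han, hcop, hPeq, hQeq⟩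
end
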